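/- For every μ ∈ ca₊(Ω) one has sup_{h ∈ H∩C_b(Ω)} ⟨h,μ⟩ = max( sup_{h₁ ∈ H₁} ⟨h₁,μ₁⟩ , sup_{h₂ ∈ H₂} ⟨h₂,μ₂⟩ ) = sup_{h ∈ H} ⟨h,μ⟩. Consequently, H° = {μ ∈ ca₊(Ω) : μ₁ ∈ H₁°, μ₂ ∈ H₂°}. -/

import Mathlib

open MeasureTheory Filter ENNReal NNReal

section Defs

variable {Ω : Type*} [TopologicalSpace Ω] [MeasurableSpace Ω]

/-- The polar of a set `H` of `[0,∞]`-valued Borel functions: all finite positive Borel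
measures `μ` with `⟨f,μ⟩ = ∫ f dμ ≤ 1` for every `f ∈ H`. -/
def polar (H : Set (Ω → ℝ≥0∞)) : Set (Measure Ω) :=
  {μ | IsFiniteMeasure μ ∧ ∀ f ∈ H, ∫⁻ x, f x ∂μ ≤ 1}

/-- The bipolar of a set `H` of `[0,∞]`-valued Borel functions. -/
def bipolar (H : Set (Ω → ℝ≥0∞)) : Set (Ω → ℝ≥0∞) :=
  {f | Measurable f ∧ ∀ μ ∈ polar H, ∫⁻ x, f x ∂μ ≤ 1}

/-- `h` is (the coercion of) a bounded continuous real-valued function. -/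
def IsCb (h : Ω → ℝ≥0∞) : Prop :=
  Continuous h ∧ ∃ C : ℝ≥0, ∀ x, h x ≤ C

/-- `h` is (the coercion of) a bounded upper semicontinuous real-valued function. -/
def IsUb (h : Ω → ℝ≥0∞) : Prop :=
  UpperSemicontinuous h ∧ ∃ C : ℝ≥0, ∀ x, h x ≤ C

/-- `H` is monotone. -/
def MonotoneSet (H : Set (Ω → ℝ≥0∞)) : Prop :=
  ∀ f : Ω → ℝ≥0∞, Measurable f → (∃ h ∈ H, ∀ x, f x ≤ h x) → f ∈ H

/-- `H` is regular. -/
def RegularSet (H : Set (Ω → ℝ≥0∞)) : Prop :=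
  ∀ μ : Measure Ω, IsFiniteMeasure μ →
    sSup {x : ℝ≥0∞ | ∃ h ∈ H, IsUb h ∧ x = ∫⁻ ω, h ω ∂μ} =
      sSup {x : ℝ≥0∞ | ∃ h ∈ H, IsCb h ∧ x = ∫⁻ ω, h ω ∂μ}

/-- `H` is closed under `liminf`. -/
def LiminfClosed (H : Set (Ω → ℝ≥0∞)) : Prop :=
  ∀ h : ℕ → Ω → ℝ≥0∞, (∀ n, h n ∈ H) →
    (fun x => liminf (fun n => h n x) atTop) ∈ H

/-- `H` is convex. -/
def ConvexSet (H : Set (Ω → ℝ≥0∞)) : Prop :=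
  ∀ f ∈ H, ∀ g ∈ H, ∀ t : ℝ≥0∞, t ≤ 1 →
    (fun x => t * f x + (1 - t) * g x) ∈ H

/-- The sublinear pricing functional `π(f) = sup_{μ ∈ H°} ⟨f,μ⟩` associated with `H`. -/
noncomputable def priceH (H : Set (Ω → ℝ≥0∞)) (f : Ω → ℝ≥0∞) : ℝ≥0∞ :=
  sSup {x : ℝ≥0∞ | ∃ μ ∈ polar H, x = ∫⁻ ω, f ω ∂μ}

end Defs

section Transport

variable {Ω₁ Ω₂ : Type*}
  [TopologicalSpace Ω₁] [MeasurableSpace Ω₁]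
  [TopologicalSpace Ω₂] [MeasurableSpace Ω₂]

/-- The set `H` of all nonnegative Borel functions on the product space dominated by a sum
`h₁ ⊕ h₂` with `π₁(h₁) + π₂(h₂) ≤ 1`. -/
def transportSet (H₁ : Set (Ω₁ → ℝ≥0∞)) (H₂ : Set (Ω₂ → ℝ≥0∞)) :
    Set (Ω₁ × Ω₂ → ℝ≥0∞) :=
  {f | Measurable f ∧ ∃ (h₁ : Ω₁ → ℝ≥0∞) (h₂ : Ω₂ → ℝ≥0∞),
    Measurable h₁ ∧ Measurable h₂ ∧ (∀ ω, f ω ≤ h₁ ω.1 + h₂ ω.2) ∧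
    priceH H₁ h₁ + priceH H₂ h₂ ≤ 1}

/-- The finite positive Borel measures on the product space whose first marginal lies in
`H₁°` and whose second marginal lies in `H₂°`. -/
def marginalSet (H₁ : Set (Ω₁ → ℝ≥0∞)) (H₂ : Set (Ω₂ → ℝ≥0∞)) :
    Set (Measure (Ω₁ × Ω₂)) :=
  {μ | IsFiniteMeasure μ ∧ μ.map Prod.fst ∈ polar H₁ ∧ μ.map Prod.snd ∈ polar H₂}

/-- The transport functional
`π(f) = sup{⟨f,μ⟩ : μ ∈ ca₊(Ω₁ × Ω₂), μ₁ ∈ H₁°, μ₂ ∈ H₂°}`. -/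
noncomputable def transportPrice (H₁ : Set (Ω₁ → ℝ≥0∞)) (H₂ : Set (Ω₂ → ℝ≥0∞))
    (f : Ω₁ × Ω₂ → ℝ≥0∞) : ℝ≥0∞ :=
  sSup {x : ℝ≥0∞ | ∃ μ ∈ marginalSet H₁ H₂, x = ∫⁻ ω, f ω ∂μ}

end Transport


section AuxProofs

variable {Ω : Type*} [MetricSpace Ω] [MeasurableSpace Ω] [BorelSpace Ω]

/-- Any simple function can be approximated from below, in `L¹`-sense, by a bounded upper
semicontinuous function, with respect to any finite Borel measure on a metric space. -/
lemma usc_approx_simpleFunc (μ : Measure Ω) [IsFiniteMeasure μ] (s : SimpleFunc Ω ℝ≥0∞) :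
    ∀ ε : ℝ≥0∞, ε ≠ 0 → ∃ g : Ω → ℝ≥0∞, UpperSemicontinuous g ∧ Measurable g ∧
      (∀ x, g x ≤ s x) ∧ s.lintegral μ ≤ ∫⁻ x, g x ∂μ + ε := by
  induction s using MeasureTheory.SimpleFunc.induction with
  | @const c A hA =>
    intro ε hε
    have hcoe : ∀ x, (SimpleFunc.piecewise A hA (SimpleFunc.const Ω c)
        (SimpleFunc.const Ω 0)) x = A.indicator (fun _ => c) x := by
      intro x
      classical
      rw [SimpleFunc.piecewise_apply, Set.indicator_apply]
      simp
    have hlint : (SimpleFunc.piecewise A hA (SimpleFunc.const Ω c)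
        (SimpleFunc.const Ω 0)).lintegral μ = c * μ A := by
      rw [← SimpleFunc.lintegral_eq_lintegral, ← lintegral_indicator_const hA c]
      exact lintegral_congr hcoe
    rcases eq_or_ne c 0 with hc0 | hc0
    · refine ⟨fun _ => 0, upperSemicontinuous_const, measurable_const,
        fun x => zero_le, ?_⟩
      rw [hlint, hc0, zero_mul]
      exact zero_le
    rcases eq_or_ne (μ A) 0 with hA0 | hA0
    · refine ⟨fun _ => 0, upperSemicontinuous_const, measurable_const,
        fun x => zero_le, ?_⟩
      rw [hlint, hA0, mul_zero]
      exact zero_le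
    -- now `c ≠ 0` and `μ A ≠ 0`
    have hAtop : μ A ≠ ∞ := measure_ne_top μ A
    rcases eq_or_ne c ∞ with hctop | hctop
    · -- `c = ∞`: choose a closed subset of positive measure
      obtain ⟨F, hFA, hFc, hF⟩ := hA.exists_isClosed_lt_add hAtop
        (show μ A / 2 ≠ 0 by simp [ENNReal.div_eq_zero_iff, hA0])
      have hF0 : μ F ≠ 0 := by
        intro h0
        rw [h0, zero_add] at hF
        exact absurd hF (not_lt.2 (ENNReal.half_le_self))
      refine ⟨F.indicator fun _ => c, hFc.upperSemicontinuous_indicator (zero_le),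
        measurable_const.indicator hFc.measurableSet, ?_, ?_⟩
      · intro x
        rw [hcoe x]
        by_cases hx : x ∈ F
        · rw [Set.indicator_of_mem hx, Set.indicator_of_mem (hFA hx)]
        · rw [Set.indicator_of_notMem hx]; exact zero_le
      · rw [hlint, lintegral_indicator_const hFc.measurableSet]
        have : c * μ F = ∞ := by rw [hctop, ENNReal.top_mul hF0]
        rw [this]
        exact le_top
    · -- `c` finite and nonzero
      obtain ⟨F, hFA, hFc, hF⟩ := hA.exists_isClosed_lt_add hAtop
        (show ε / c ≠ 0 by simp [ENNReal.div_eq_zero_iff, hε, hctop])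
      refine ⟨F.indicator fun _ => c, hFc.upperSemicontinuous_indicator (zero_le),
        measurable_const.indicator hFc.measurableSet, ?_, ?_⟩
      · intro x
        rw [hcoe x]
        by_cases hx : x ∈ F
        · rw [Set.indicator_of_mem hx, Set.indicator_of_mem (hFA hx)]
        · rw [Set.indicator_of_notMem hx]; exact zero_le
      · rw [hlint, lintegral_indicator_const hFc.measurableSet]
        calc c * μ A ≤ c * (μ F + ε / c) := mul_le_mul_right hF.le c
          _ = c * μ F + c * (ε / c) := mul_add c _ _
          _ ≤ c * μ F + ε := add_le_add_right ENNReal.mul_div_le _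
  | @add f f' _ hf hf' =>
    intro ε hε
    have hε2 : ε / 2 ≠ 0 := by simp [ENNReal.div_eq_zero_iff, hε]
    obtain ⟨g, hgu, hgm, hgle, hgint⟩ := hf (ε / 2) hε2
    obtain ⟨g', hgu', hgm', hgle', hgint'⟩ := hf' (ε / 2) hε2
    refine ⟨fun x => g x + g' x, hgu.add hgu', hgm.add hgm', ?_, ?_⟩
    · intro x
      exact add_le_add (hgle x) (hgle' x)
    · rw [SimpleFunc.add_lintegral]
      calc f.lintegral μ + f'.lintegral μ
          ≤ (∫⁻ x, g x ∂μ + ε / 2) + (∫⁻ x, g' x ∂μ + ε / 2) := add_le_add hgint hgint'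
        _ = (∫⁻ x, g x ∂μ + ∫⁻ x, g' x ∂μ) + (ε / 2 + ε / 2) := by ring
        _ = ∫⁻ x, (g x + g' x) ∂μ + ε := by
            rw [lintegral_add_left hgm, ENNReal.add_halves]

/-- For a monotone set of measurable functions, the supremum of integrals over the whole set
equals the supremum over the bounded upper semicontinuous members. -/
lemma le_sSup_ub {H : Set (Ω → ℝ≥0∞)} (hmeas : ∀ f ∈ H, Measurable f)
    (hmono : MonotoneSet H) (μ : Measure Ω) [IsFiniteMeasure μ] {h : Ω → ℝ≥0∞} (hh : h ∈ H) :
    ∫⁻ x, h x ∂μ ≤ sSup {x : ℝ≥0∞ | ∃ g ∈ H, IsUb g ∧ x = ∫⁻ ω, g ω ∂μ} := by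
  have hhm : Measurable h := hmeas h hh
  have hsup : ∀ x, ⨆ n : ℕ, min (h x) n = h x := by
    intro x
    rcases eq_or_ne (h x) ∞ with hx | hx
    · rw [hx]
      simp only [min_eq_right (le_top : (_ : ℝ≥0∞) ≤ ∞)]
      exact ENNReal.iSup_natCast
    · obtain ⟨n, hn⟩ := ENNReal.exists_nat_gt hx
      refine le_antisymm (iSup_le fun m => min_le_left _ _) ?_
      exact le_iSup_of_le n (le_of_eq (min_eq_left hn.le).symm)
  have hstep : ∫⁻ x, h x ∂μ = ⨆ n : ℕ, ∫⁻ x, min (h x) n ∂μ := by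
    rw [← lintegral_iSup (fun n => hhm.min measurable_const)
      (fun a b hab x => min_le_min le_rfl (by exact_mod_cast Nat.cast_le.2 hab))]
    simp_rw [hsup]
  rw [hstep]
  refine iSup_le fun n => ?_
  set h' : Ω → ℝ≥0∞ := fun x => min (h x) n with hh'def
  have hh'm : Measurable h' := hhm.min measurable_const
  have hh'H : h' ∈ H := hmono h' hh'm ⟨h, hh, fun x => min_le_left _ _⟩
  have hgoal : ∫⁻ x, h' x ∂μ ≤ sSup {x : ℝ≥0∞ | ∃ g ∈ H, IsUb g ∧ x = ∫⁻ ω, g ω ∂μ} := by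
    rw [lintegral_eq_iSup_eapprox_lintegral hh'm]
    refine iSup_le fun k => ?_
    apply ENNReal.le_of_forall_pos_le_add
    intro ε hε _
    obtain ⟨g, hgu, hgm, hgle, hgint⟩ := usc_approx_simpleFunc μ (SimpleFunc.eapprox h' k)
      ε (by exact_mod_cast hε.ne')
    have heap : ∀ x, (SimpleFunc.eapprox h' k) x ≤ h' x := by
      intro x
      rw [← SimpleFunc.iSup_eapprox_apply hh'm x]
      exact le_iSup (fun m => (SimpleFunc.eapprox h' m) x) k
    have hgle' : ∀ x, g x ≤ h x := fun x =>
      ((hgle x).trans (heap x)).trans (min_le_left _ _)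
    have hgH : g ∈ H := hmono g hgm ⟨h, hh, hgle'⟩
    have hgUb : IsUb g := by
      refine ⟨hgu, n, fun x => ?_⟩
      calc g x ≤ h' x := (hgle x).trans (heap x)
        _ ≤ (n : ℝ≥0∞) := min_le_right _ _
        _ = ((n : ℝ≥0) : ℝ≥0∞) := by simp
    have : ∫⁻ x, g x ∂μ ≤ sSup {x : ℝ≥0∞ | ∃ g ∈ H, IsUb g ∧ x = ∫⁻ ω, g ω ∂μ} :=
      le_sSup ⟨g, hgH, hgUb, rfl⟩
    exact hgint.trans (add_le_add_left this _)
  exact hgoal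

end AuxProofs


/-- Scaling estimate: the integral of any function against `ν` is controlled by its price
times (a bit more than) the support functional of `ν` over `H`. -/
lemma scaling_bound {Ωi : Type*} [MeasurableSpace Ωi] (Hi : Set (Ωi → ℝ≥0∞))
    (νi : Measure Ωi) [IsFiniteMeasure νi] (hi : Ωi → ℝ≥0∞) {ε : ℝ≥0}
    (hεne : (ε : ℝ≥0∞) ≠ 0) {Ai : ℝ≥0∞}
    (hAi : Ai = sSup {x : ℝ≥0∞ | ∃ g ∈ Hi, x = ∫⁻ ω, g ω ∂νi}) (hAitop : Ai ≠ ∞) :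
    ∫⁻ ω, hi ω ∂νi ≤ priceH Hi hi * (Ai + ε) := by
  set r : ℝ≥0∞ := (Ai + ε)⁻¹ with hrdef
  have hAε0 : Ai + (ε : ℝ≥0∞) ≠ 0 := by
    intro h0
    exact hεne (by simpa using (add_eq_zero.1 h0).2)
  have hAεtop : Ai + (ε : ℝ≥0∞) ≠ ∞ := ENNReal.add_ne_top.2 ⟨hAitop, ENNReal.coe_ne_top⟩
  have hr0 : r ≠ 0 := ENNReal.inv_ne_zero.2 hAεtop
  have hrtop : r ≠ ∞ := ENNReal.inv_ne_top.2 hAε0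
  have hνmem : (r • νi) ∈ polar Hi := by
    refine ⟨⟨?_⟩, ?_⟩
    · rw [Measure.smul_apply, smul_eq_mul]
      exact ENNReal.mul_lt_top hrtop.lt_top (measure_lt_top νi _)
    · intro g hg
      rw [lintegral_smul_measure]
      have hgA : ∫⁻ ω, g ω ∂νi ≤ Ai := hAi ▸ le_sSup ⟨g, hg, rfl⟩
      calc r * ∫⁻ ω, g ω ∂νi ≤ r * (Ai + ε) :=
            mul_le_mul_right (hgA.trans le_self_add) r
        _ = 1 := ENNReal.inv_mul_cancel hAε0 hAεtop
  have hrint : r * ∫⁻ ω, hi ω ∂νi ≤ priceH Hi hi :=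
    le_sSup ⟨r • νi, hνmem, (lintegral_smul_measure r hi).symm⟩
  calc ∫⁻ ω, hi ω ∂νi = r⁻¹ * (r * ∫⁻ ω, hi ω ∂νi) := by
        rw [← mul_assoc, ENNReal.inv_mul_cancel hr0 hrtop, one_mul]
    _ ≤ r⁻¹ * priceH Hi hi := mul_le_mul_right hrint _
    _ = priceH Hi hi * (Ai + ε) := by rw [hrdef, inv_inv, mul_comm]

/-- (Equation (4.1) in the proof of Theorem 4.1 in Bartl–Kupper, "A pointwise bipolar
theorem".)  For every `μ ∈ ca₊(Ω₁ × Ω₂)` one has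
`sup_{h ∈ H ∩ C_b} ⟨h,μ⟩ = max(sup_{h₁ ∈ H₁} ⟨h₁,μ₁⟩, sup_{h₂ ∈ H₂} ⟨h₂,μ₂⟩)
  = sup_{h ∈ H} ⟨h,μ⟩`; consequently `H° = {μ : μ₁ ∈ H₁°, μ₂ ∈ H₂°}`. -/
theorem transport_support_function
    {Ω₁ Ω₂ : Type*}
    [MetricSpace Ω₁] [SigmaCompactSpace Ω₁] [MeasurableSpace Ω₁] [BorelSpace Ω₁]
    [MetricSpace Ω₂] [SigmaCompactSpace Ω₂] [MeasurableSpace Ω₂] [BorelSpace Ω₂]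
    (H₁ : Set (Ω₁ → ℝ≥0∞)) (H₂ : Set (Ω₂ → ℝ≥0∞))
    (hmeas₁ : ∀ f ∈ H₁, Measurable f) (hmeas₂ : ∀ f ∈ H₂, Measurable f)
    (hne₁ : H₁.Nonempty) (hne₂ : H₂.Nonempty)
    (hmono₁ : MonotoneSet H₁) (hmono₂ : MonotoneSet H₂)
    (hconv₁ : ConvexSet H₁) (hconv₂ : ConvexSet H₂)
    (hreg₁ : RegularSet H₁) (hreg₂ : RegularSet H₂)
    (hliminf₁ : LiminfClosed H₁) (hliminf₂ : LiminfClosed H₂) :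
    (∀ μ : Measure (Ω₁ × Ω₂), IsFiniteMeasure μ →
      sSup {x : ℝ≥0∞ | ∃ h ∈ transportSet H₁ H₂, IsCb h ∧ x = ∫⁻ ω, h ω ∂μ} =
        max (sSup {x : ℝ≥0∞ | ∃ h₁ ∈ H₁, x = ∫⁻ ω, h₁ ω ∂(μ.map Prod.fst)})
            (sSup {x : ℝ≥0∞ | ∃ h₂ ∈ H₂, x = ∫⁻ ω, h₂ ω ∂(μ.map Prod.snd)}) ∧
      sSup {x : ℝ≥0∞ | ∃ h ∈ transportSet H₁ H₂, x = ∫⁻ ω, h ω ∂μ} =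
        max (sSup {x : ℝ≥0∞ | ∃ h₁ ∈ H₁, x = ∫⁻ ω, h₁ ω ∂(μ.map Prod.fst)})
            (sSup {x : ℝ≥0∞ | ∃ h₂ ∈ H₂, x = ∫⁻ ω, h₂ ω ∂(μ.map Prod.snd)})) ∧
    polar (transportSet H₁ H₂) = marginalSet H₁ H₂ := by
  classical
  -- membership of factor functions in the transport set
  have hprice_le₁ : ∀ h₁ ∈ H₁, priceH H₁ h₁ ≤ 1 := by
    intro h₁ hh₁
    refine sSup_le ?_
    rintro x ⟨ν, hν, rfl⟩
    exact hν.2 h₁ hh₁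
  have hprice_le₂ : ∀ h₂ ∈ H₂, priceH H₂ h₂ ≤ 1 := by
    intro h₂ hh₂
    refine sSup_le ?_
    rintro x ⟨ν, hν, rfl⟩
    exact hν.2 h₂ hh₂
  have hprice0₁ : priceH H₁ (fun _ => 0) ≤ 0 := by
    refine sSup_le ?_
    rintro x ⟨ν, hν, rfl⟩
    simp
  have hprice0₂ : priceH H₂ (fun _ => 0) ≤ 0 := by
    refine sSup_le ?_
    rintro x ⟨ν, hν, rfl⟩
    simp
  have hfst : ∀ h₁ ∈ H₁, (fun ω : Ω₁ × Ω₂ => h₁ ω.1) ∈ transportSet H₁ H₂ := by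
    intro h₁ hh₁
    refine ⟨(hmeas₁ h₁ hh₁).comp measurable_fst, h₁, fun _ => 0, hmeas₁ h₁ hh₁,
      measurable_const, fun ω => by simp, ?_⟩
    calc priceH H₁ h₁ + priceH H₂ (fun _ => 0) ≤ 1 + 0 :=
          add_le_add (hprice_le₁ h₁ hh₁) hprice0₂
      _ = 1 := add_zero 1
  have hsnd : ∀ h₂ ∈ H₂, (fun ω : Ω₁ × Ω₂ => h₂ ω.2) ∈ transportSet H₁ H₂ := by
    intro h₂ hh₂
    refine ⟨(hmeas₂ h₂ hh₂).comp measurable_snd, fun _ => 0, h₂, measurable_const,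
      hmeas₂ h₂ hh₂, fun ω => by simp, ?_⟩
    calc priceH H₁ (fun _ => 0) + priceH H₂ h₂ ≤ 0 + 1 :=
          add_le_add hprice0₁ (hprice_le₂ h₂ hh₂)
      _ = 1 := zero_add 1
  constructor
  · intro μ hμfin
    haveI := hμfin
    haveI : IsFiniteMeasure (μ.map Prod.fst) := Measure.isFiniteMeasure_map μ Prod.fst
    haveI : IsFiniteMeasure (μ.map Prod.snd) := Measure.isFiniteMeasure_map μ Prod.snd
    set A₁ := sSup {x : ℝ≥0∞ | ∃ h₁ ∈ H₁, x = ∫⁻ ω, h₁ ω ∂(μ.map Prod.fst)} with hA₁def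
    set A₂ := sSup {x : ℝ≥0∞ | ∃ h₂ ∈ H₂, x = ∫⁻ ω, h₂ ω ∂(μ.map Prod.snd)} with hA₂def
    -- upper bound: the full sup is at most `max A₁ A₂`
    have hle : sSup {x : ℝ≥0∞ | ∃ h ∈ transportSet H₁ H₂, x = ∫⁻ ω, h ω ∂μ} ≤ max A₁ A₂ := by
      refine sSup_le ?_
      rintro x ⟨h, ⟨hhm, h₁, h₂, hm1, hm2, hbound, hprice⟩, rfl⟩
      rcases eq_or_ne A₁ ∞ with hA1 | hA1
      · rw [hA1]; simp
      rcases eq_or_ne A₂ ∞ with hA2 | hA2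
      · rw [hA2]; simp
      apply ENNReal.le_of_forall_pos_le_add
      intro ε hε _
      have hεne : ((ε : ℝ≥0∞)) ≠ 0 := by exact_mod_cast hε.ne'
      have key₁ : ∫⁻ ω, h₁ ω ∂(μ.map Prod.fst) ≤ priceH H₁ h₁ * (A₁ + ε) :=
        scaling_bound H₁ (μ.map Prod.fst) h₁ hεne hA₁def hA1
      have key₂ : ∫⁻ ω, h₂ ω ∂(μ.map Prod.snd) ≤ priceH H₂ h₂ * (A₂ + ε) :=
        scaling_bound H₂ (μ.map Prod.snd) h₂ hεne hA₂def hA2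
      calc ∫⁻ ω, h ω ∂μ ≤ ∫⁻ ω, (h₁ ω.1 + h₂ ω.2) ∂μ := lintegral_mono hbound
        _ = ∫⁻ ω, h₁ ω.1 ∂μ + ∫⁻ ω, h₂ ω.2 ∂μ :=
            lintegral_add_left (hm1.comp measurable_fst) _
        _ = ∫⁻ ω, h₁ ω ∂(μ.map Prod.fst) + ∫⁻ ω, h₂ ω ∂(μ.map Prod.snd) := by
            rw [lintegral_map hm1 measurable_fst, lintegral_map hm2 measurable_snd]
        _ ≤ priceH H₁ h₁ * (A₁ + ε) + priceH H₂ h₂ * (A₂ + ε) := add_le_add key₁ key₂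
        _ ≤ priceH H₁ h₁ * (max A₁ A₂ + ε) + priceH H₂ h₂ * (max A₁ A₂ + ε) :=
            add_le_add (mul_le_mul_right (add_le_add_left (le_max_left _ _) _) _)
              (mul_le_mul_right (add_le_add_left (le_max_right _ _) _) _)
        _ = (priceH H₁ h₁ + priceH H₂ h₂) * (max A₁ A₂ + ε) := (add_mul _ _ _).symm
        _ ≤ 1 * (max A₁ A₂ + ε) := mul_le_mul_left hprice _
        _ = max A₁ A₂ + ε := one_mul _
    -- lower bound: `max A₁ A₂` is at most the sup over continuous bounded members
    have hCb : max A₁ A₂ ≤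
        sSup {x : ℝ≥0∞ | ∃ h ∈ transportSet H₁ H₂, IsCb h ∧ x = ∫⁻ ω, h ω ∂μ} := by
      refine max_le ?_ ?_
      · have e1 : A₁ ≤ sSup {x : ℝ≥0∞ | ∃ g ∈ H₁, IsUb g ∧ x = ∫⁻ ω, g ω ∂(μ.map Prod.fst)} := by
          rw [hA₁def]
          refine sSup_le ?_
          rintro x ⟨g, hg, rfl⟩
          exact le_sSup_ub hmeas₁ hmono₁ (μ.map Prod.fst) hg
        rw [hreg₁ (μ.map Prod.fst) inferInstance] at e1
        refine e1.trans (sSup_le ?_)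
        rintro x ⟨g, hg, ⟨hgc, C, hC⟩, rfl⟩
        refine le_sSup ⟨fun ω => g ω.1, hfst g hg,
          ⟨hgc.comp continuous_fst, C, fun ω => hC ω.1⟩, ?_⟩
        rw [lintegral_map (hmeas₁ g hg) measurable_fst]
      · have e2 : A₂ ≤ sSup {x : ℝ≥0∞ | ∃ g ∈ H₂, IsUb g ∧ x = ∫⁻ ω, g ω ∂(μ.map Prod.snd)} := by
          rw [hA₂def]
          refine sSup_le ?_
          rintro x ⟨g, hg, rfl⟩
          exact le_sSup_ub hmeas₂ hmono₂ (μ.map Prod.snd) hg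
        rw [hreg₂ (μ.map Prod.snd) inferInstance] at e2
        refine e2.trans (sSup_le ?_)
        rintro x ⟨g, hg, ⟨hgc, C, hC⟩, rfl⟩
        refine le_sSup ⟨fun ω => g ω.2, hsnd g hg,
          ⟨hgc.comp continuous_snd, C, fun ω => hC ω.2⟩, ?_⟩
        rw [lintegral_map (hmeas₂ g hg) measurable_snd]
    have hsub : sSup {x : ℝ≥0∞ | ∃ h ∈ transportSet H₁ H₂, IsCb h ∧ x = ∫⁻ ω, h ω ∂μ} ≤
        sSup {x : ℝ≥0∞ | ∃ h ∈ transportSet H₁ H₂, x = ∫⁻ ω, h ω ∂μ} := by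
      refine sSup_le_sSup ?_
      rintro x ⟨h, hh, _, rfl⟩
      exact ⟨h, hh, rfl⟩
    exact ⟨le_antisymm (hsub.trans hle) hCb, le_antisymm hle (hCb.trans hsub)⟩
  · ext ν
    constructor
    · rintro ⟨hfin, hpol⟩
      haveI := hfin
      refine ⟨hfin, ⟨Measure.isFiniteMeasure_map ν Prod.fst, fun g hg => ?_⟩,
        ⟨Measure.isFiniteMeasure_map ν Prod.snd, fun g hg => ?_⟩⟩
      · rw [lintegral_map (hmeas₁ g hg) measurable_fst]
        exact hpol _ (hfst g hg)
      · rw [lintegral_map (hmeas₂ g hg) measurable_snd]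
        exact hpol _ (hsnd g hg)
    · rintro ⟨hfin, hmar₁, hmar₂⟩
      haveI := hfin
      refine ⟨hfin, ?_⟩
      rintro f ⟨hfm, h₁, h₂, hm1, hm2, hbound, hprice⟩
      have e1 : ∫⁻ ω, h₁ ω ∂(ν.map Prod.fst) ≤ priceH H₁ h₁ :=
        le_sSup ⟨ν.map Prod.fst, hmar₁, rfl⟩
      have e2 : ∫⁻ ω, h₂ ω ∂(ν.map Prod.snd) ≤ priceH H₂ h₂ :=
        le_sSup ⟨ν.map Prod.snd, hmar₂, rfl⟩
      calc ∫⁻ ω, f ω ∂ν ≤ ∫⁻ ω, (h₁ ω.1 + h₂ ω.2) ∂ν := lintegral_mono hbound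
        _ = ∫⁻ ω, h₁ ω.1 ∂ν + ∫⁻ ω, h₂ ω.2 ∂ν :=
            lintegral_add_left (hm1.comp measurable_fst) _
        _ = ∫⁻ ω, h₁ ω ∂(ν.map Prod.fst) + ∫⁻ ω, h₂ ω ∂(ν.map Prod.snd) := by
            rw [lintegral_map hm1 measurable_fst, lintegral_map hm2 measurable_snd]
        _ ≤ priceH H₁ h₁ + priceH H₂ h₂ := add_le_add e1 e2
        _ ≤ 1 := hprice
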